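/- The 2-color Rado number of the equation x₁² + x₂² + ... + x₁₁² = z² (eleven squares summing to a square) equals 20: every 2-coloring of {1, ..., 20} admits a monochromatic solution, and there exists a 2-coloring of {1, ..., 19} with no monochromatic solution. -/

import Mathlib

set_option maxRecDepth 40000

namespace Rado11Aux

/-! ### Machinery for the upper bound (N = 20) -/

/-- The 14 relevant values in `{1, …, 20}`. -/
def V : Fin 14 → ℕ := ![1,2,3,4,5,6,7,9,10,15,16,17,19,20]

/-- A witness solution: 11 indices for the `x`'s, one index for `z`, and the
bitmask of all indices involved. -/
structure Wit where
  xf : Fin 11 → Fin 14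
  zi : Fin 14
  mask : ℕ

def W : List Wit := [
  ⟨![1,1,1,1,1,1,1,1,1,1,2], 6, 70⟩,
  ⟨![0,0,0,0,0,0,0,0,0,5,5], 7, 161⟩,
  ⟨![3,3,3,3,3,3,3,5,5,5,5], 10, 1064⟩,
  ⟨![0,5,5,5,5,5,5,5,5,5,5], 12, 4129⟩,
  ⟨![0,0,0,1,1,1,1,1,1,1,9], 10, 1539⟩,
  ⟨![0,0,0,0,2,2,2,2,2,3,3], 7, 141⟩,
  ⟨![2,2,2,2,2,2,2,2,5,5,7], 9, 676⟩,
  ⟨![1,1,1,3,3,3,3,7,7,7,7], 13, 8330⟩,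
  ⟨![1,1,1,4,5,5,5,5,5,5,5], 11, 2098⟩,
  ⟨![2,2,3,3,4,4,4,4,4,4,4], 9, 540⟩,
  ⟨![2,2,2,2,2,2,2,2,5,5,10], 13, 9252⟩,
  ⟨![1,1,1,1,1,1,1,1,3,3,5], 8, 298⟩,
  ⟨![4,4,5,5,5,5,5,5,5,6,6], 13, 8304⟩,
  ⟨![2,2,2,2,2,2,2,3,3,3,11], 13, 10252⟩,
  ⟨![2,2,2,2,4,4,4,4,4,8,8], 12, 4372⟩,
  ⟨![0,0,0,0,0,0,0,0,7,8,8], 11, 2433⟩,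
  ⟨![1,1,1,1,1,1,1,6,6,6,7], 10, 1218⟩,
  ⟨![0,0,0,0,0,0,0,0,1,1,2], 4, 23⟩,
  ⟨![0,0,0,0,0,0,0,0,2,3,3], 6, 77⟩,
  ⟨![3,3,4,4,4,4,4,4,6,6,7], 12, 4312⟩,
  ⟨![1,1,1,1,1,1,1,1,1,2,5], 7, 166⟩,
  ⟨![1,1,3,3,3,3,3,3,3,3,9], 12, 4618⟩,
  ⟨![1,1,1,1,1,1,1,1,1,5,11], 12, 6178⟩,
  ⟨![0,0,0,0,0,0,5,5,6,6,6], 9, 609⟩,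
  ⟨![2,2,2,2,2,2,2,6,6,8,8], 12, 4420⟩,
  ⟨![3,3,3,3,3,3,5,5,5,5,6], 11, 2152⟩,
  ⟨![1,1,1,1,1,1,1,6,6,6,9], 13, 8770⟩,
  ⟨![0,0,0,0,0,3,3,7,7,7,7], 12, 4233⟩,
  ⟨![0,0,1,1,1,1,1,1,1,2,12], 13, 12295⟩,
  ⟨![0,0,0,0,0,0,1,1,1,2,2], 5, 39⟩,
  ⟨![0,3,3,4,4,4,4,4,4,4,7], 11, 2201⟩,
  ⟨![0,0,0,0,0,0,0,2,2,8,8], 9, 773⟩,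
  ⟨![1,1,4,4,4,4,4,4,4,4,7], 11, 2194⟩,
  ⟨![4,4,4,4,4,4,4,4,4,5,8], 12, 4400⟩,
  ⟨![0,0,0,1,1,3,3,3,3,8,9], 13, 8971⟩,
  ⟨![0,0,0,0,0,0,1,1,4,4,5], 8, 307⟩,
  ⟨![1,1,1,1,2,2,2,2,3,3,3], 8, 270⟩,
  ⟨![2,3,3,3,3,5,5,5,5,5,5], 11, 2092⟩,
  ⟨![0,0,0,0,0,0,0,0,0,1,5], 6, 99⟩,
  ⟨![0,0,0,0,0,0,0,3,3,4,5], 8, 313⟩,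
  ⟨![0,0,0,0,0,0,0,1,1,1,7], 8, 387⟩,
  ⟨![1,1,1,1,1,4,5,5,5,5,5], 9, 562⟩,
  ⟨![1,1,1,1,1,2,2,2,2,8,8], 10, 1286⟩,
  ⟨![0,0,0,0,0,2,3,4,4,4,10], 12, 5149⟩]

def Chk (m : ℕ) : Bool :=
  W.any fun w => (m &&& w.mask == w.mask) || (m &&& w.mask == 0)

def chkRow (b : ℕ) : ℕ → Bool
  | 0 => true
  | a+1 => Chk (a + 128 * b) && chkRow b a

def chkAll : ℕ → Bool
  | 0 => true
  | b+1 => chkRow b 128 && chkAll b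

set_option maxHeartbeats 8000000 in
lemma chk_all_eval : chkAll 128 = true := by decide

lemma chkRow_spec (b : ℕ) : ∀ n, chkRow b n = true → ∀ a, a < n → Chk (a + 128 * b) = true
  | 0, _, a, h => absurd h (Nat.not_lt_zero a)
  | n+1, hr, a, h => by
    rw [chkRow] at hr
    obtain ⟨h1, h2⟩ := Bool.and_eq_true_iff.mp hr
    rcases Nat.lt_succ_iff_lt_or_eq.mp h with h' | rfl
    · exact chkRow_spec b n h2 a h'
    · exact h1

lemma chkAll_spec : ∀ n, chkAll n = true → ∀ b, b < n → chkRow b 128 = true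
  | 0, _, b, h => absurd h (Nat.not_lt_zero b)
  | n+1, hr, b, h => by
    rw [chkAll] at hr
    obtain ⟨h1, h2⟩ := Bool.and_eq_true_iff.mp hr
    rcases Nat.lt_succ_iff_lt_or_eq.mp h with h' | rfl
    · exact chkAll_spec n h2 b h'
    · exact h1

lemma chk_all : ∀ a, a < 128 → ∀ b, b < 128 → Chk (a + 128 * b) = true := by
  intro a ha b hb
  exact chkRow_spec b 128 (chkAll_spec 128 chk_all_eval b hb) a ha

lemma wit_sum : ∀ w ∈ W, (∑ i, (V (w.xf i))^2) = (V w.zi)^2 := by decide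

lemma wit_mask : ∀ w ∈ W,
    (∀ i : Fin 11, w.mask.testBit (w.xf i).val = true) ∧
      w.mask.testBit w.zi.val = true := by decide

lemma V_bounds : ∀ j : Fin 14, 1 ≤ V j ∧ V j ≤ 20 := by decide

lemma fin2_eq : ∀ a b : Fin 2, (a == 1) = (b == 1) → a = b := by decide

/-- Encode a list of booleans as a natural number (little endian). -/
def enc : List Bool → ℕ
  | [] => 0
  | b :: bs => (cond b 1 0) + 2 * enc bs

lemma enc_lt : ∀ bs : List Bool, enc bs < 2 ^ bs.length
  | [] => by simp [enc]
  | b :: bs => by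
    have := enc_lt bs
    cases b <;> simp [enc, List.length_cons, pow_succ] <;> omega

lemma testBit_enc : ∀ (bs : List Bool) (i : ℕ) (h : i < bs.length),
    (enc bs).testBit i = bs[i]
  | b :: bs, 0, _ => by
    cases b <;> simp [enc, Nat.testBit_zero, Nat.add_mul_mod_self_left]
  | b :: bs, i + 1, h => by
    have h' : i < bs.length := by simpa using h
    have hdiv : ((cond b 1 0) + 2 * enc bs) / 2 = enc bs := by
      cases b <;> simp <;> omega
    rw [enc, Nat.testBit_succ, hdiv, testBit_enc bs i h']
    simp

/-! ### Machinery for the lower bound (N = 19) -/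

def AL : List ℕ := [1,2,4,5,7,8,9]
def BL : List ℕ := [3,6,10,11,12,13,14,15,16,17,18,19]
def sqA : List ℕ := [1,4,16,25,49,64,81]
def sqB : List ℕ := [9,36,100,121,144,169,196,225,256,289,324,361]

/-- One step of the sums-of-squares reachability computation. -/
def step (cap : ℕ) (sq l : List ℕ) : List ℕ :=
  ((l.flatMap fun r => sq.map fun q => r + q).filter fun s => decide (s ≤ cap)).dedup

/-- Sums of `k` elements of `sq`, truncated at `cap`. -/
def reach (cap : ℕ) (sq : List ℕ) : ℕ → List ℕ
  | 0 => [0]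
  | k+1 => step cap sq (reach cap sq k)

lemma mem_step {cap : ℕ} {sq l : List ℕ} {r q : ℕ} (hr : r ∈ l) (hq : q ∈ sq)
    (h : r + q ≤ cap) : r + q ∈ step cap sq l := by
  unfold step
  rw [List.mem_dedup, List.mem_filter]
  exact ⟨List.mem_flatMap.mpr ⟨r, hr, List.mem_map.mpr ⟨q, hq, rfl⟩⟩, by simpa using h⟩

lemma sum_mem_reach {cap : ℕ} {sq : List ℕ} :
    ∀ (k : ℕ) (x : Fin k → ℕ), (∀ i, (x i)^2 ∈ sq) → (∑ i, (x i)^2) ≤ cap →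
      (∑ i, (x i)^2) ∈ reach cap sq k
  | 0, x, _, _ => by simp [reach]
  | k+1, x, hx, hle => by
    rw [Fin.sum_univ_succ] at hle ⊢
    have htail : (∑ i : Fin k, (x i.succ)^2) ≤ cap := by omega
    have h := mem_step (sum_mem_reach k (fun i => x i.succ) (fun i => hx i.succ) htail)
      (hx 0) (show (∑ i : Fin k, (x i.succ)^2) + (x 0)^2 ≤ cap by omega)
    rw [Nat.add_comm] at h
    exact h

lemma sqA_mem : ∀ n ∈ AL, n^2 ∈ sqA := by decide
lemma A_nine : ∀ n ∈ AL, n ≤ 9 := by decide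
lemma noA : ∀ n ∈ AL, n^2 ∉ reach 81 sqA 11 := by decide
lemma B_of : ∀ n < 20, 1 ≤ n → n ∉ AL → n ∈ BL := by decide
lemma sqB_mem : ∀ n ∈ BL, n^2 ∈ sqB := by decide
lemma noB : ∀ n ∈ BL, n^2 ∉ reach 361 sqB 11 := by decide

end Rado11Aux

open Rado11Aux in
/-- The 2-color Rado number of `x₁² + ⋯ + x_11² = z²` equals 20: every 2-coloring of
`{1, …, 20}` admits a monochromatic solution, and there exists a 2-coloring of
`{1, …, 19}` with no monochromatic solution. -/
theorem rado_number_two_colors_sum_11_squares_eq_square :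
    (∀ χ : ℕ → Fin 2, ∃ (x : Fin 11 → ℕ) (z : ℕ),
      (∀ i, 1 ≤ x i ∧ x i ≤ 20) ∧ 1 ≤ z ∧ z ≤ 20 ∧
      (∀ i, χ (x i) = χ z) ∧ (∑ i, (x i) ^ 2) = z ^ 2) ∧
    (∃ χ : ℕ → Fin 2, ¬ ∃ (x : Fin 11 → ℕ) (z : ℕ),
      (∀ i, 1 ≤ x i ∧ x i ≤ 19) ∧ 1 ≤ z ∧ z ≤ 19 ∧
      (∀ i, χ (x i) = χ z) ∧ (∑ i, (x i) ^ 2) = z ^ 2) := by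
  constructor
  · -- Upper bound: every 2-coloring of {1, …, 20} has a monochromatic solution.
    intro χ
    set bs : List Bool := List.ofFn (fun j : Fin 14 => χ (V j) == 1) with hbs
    have hlen : bs.length = 14 := by simp [hbs]
    set m : ℕ := enc bs with hm
    have hmlt : m < 16384 := by
      have := enc_lt bs
      rw [hlen] at this
      simpa using this
    have hchk : Chk m = true := by
      have h1 : m % 128 < 128 := Nat.mod_lt _ (by norm_num)
      have h2 : m / 128 < 128 := by omega
      have := chk_all (m % 128) h1 (m / 128) h2
      rwa [Nat.mod_add_div] at this
    obtain ⟨w, hwW, hw⟩ := List.any_eq_true.mp hchk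
    have H : ∀ j : Fin 14, m.testBit j.val = (χ (V j) == 1) := by
      intro j
      have hj : (j : ℕ) < bs.length := by rw [hlen]; exact j.isLt
      rw [hm, testBit_enc bs j hj]
      simp only [hbs, List.getElem_ofFn, Fin.eta]
    obtain ⟨hxbits, hzbit⟩ := wit_mask w hwW
    have key : ∀ j : Fin 14, w.mask.testBit j.val = true →
        m.testBit j.val = m.testBit w.zi.val := by
      have hw' : m &&& w.mask = w.mask ∨ m &&& w.mask = 0 := by
        simpa using hw
      rcases hw' with heq | heq
      ·
        have hall : ∀ j : Fin 14, w.mask.testBit j.val = true →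
            m.testBit j.val = true := by
          intro j hj
          have := congrArg (fun n => n.testBit j.val) heq
          simp only [Nat.testBit_land, hj, Bool.and_true] at this
          exact this
        intro j hj
        rw [hall j hj, hall w.zi hzbit]
      ·
        have hall : ∀ j : Fin 14, w.mask.testBit j.val = true →
            m.testBit j.val = false := by
          intro j hj
          have := congrArg (fun n => n.testBit j.val) heq
          simp only [Nat.testBit_land, hj, Bool.and_true, Nat.zero_testBit] at this
          exact this
        intro j hj
        rw [hall j hj, hall w.zi hzbit]
    refine ⟨fun i => V (w.xf i), V w.zi,
      fun i => ⟨(V_bounds _).1, (V_bounds _).2⟩, (V_bounds _).1, (V_bounds _).2, ?_,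
      wit_sum w hwW⟩
    intro i
    apply fin2_eq
    rw [← H (w.xf i), ← H w.zi]
    exact key _ (hxbits i)
  · -- Lower bound: a good 2-coloring of {1, …, 19}.
    refine ⟨fun n => if n ∈ AL then 0 else 1, ?_⟩
    rintro ⟨x, z, hx, hz1, hz19, hc, hs⟩
    by_cases hzA : z ∈ AL
    · have hxA : ∀ i, x i ∈ AL := by
        intro i
        by_contra hni
        have := hc i
        simp only [if_neg hni, if_pos hzA] at this
        exact absurd this (by decide)
      have hsq : ∀ i, (x i)^2 ∈ sqA := fun i => sqA_mem _ (hxA i)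
      have hz9 : z ≤ 9 := A_nine z hzA
      have hle : (∑ i, (x i)^2) ≤ 81 := by
        rw [hs]
        calc z ^ 2 ≤ 9 ^ 2 := Nat.pow_le_pow_left hz9 2
        _ = 81 := by norm_num
      exact noA z hzA (hs ▸ sum_mem_reach 11 x hsq hle)
    · have hzB : z ∈ BL := B_of z (by omega) hz1 hzA
      have hxB : ∀ i, x i ∈ BL := by
        intro i
        have hci := hc i
        by_cases hia : x i ∈ AL
        · simp only [if_pos hia, if_neg hzA] at hci
          exact absurd hci (by decide)
        · exact B_of (x i) (by have := (hx i).2; omega) (hx i).1 hia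
      have hsq : ∀ i, (x i)^2 ∈ sqB := fun i => sqB_mem _ (hxB i)
      have hle : (∑ i, (x i)^2) ≤ 361 := by
        rw [hs]
        calc z ^ 2 ≤ 19 ^ 2 := Nat.pow_le_pow_left hz19 2
        _ = 361 := by norm_num
      exact noB z hzB (hs ▸ sum_mem_reach 11 x hsq hle)
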